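/- Let $R$ be a commutative ring whose Bass stable range is at most $n$, and let $I \subset R$ be an ideal such that $R/I$ is finitely presented as an $R$-algebra (e.g., $I$ finitely generated). Then every unimodular row of length $n$ over $R/I$ lifts to a unimodular row of length $n$ over $R$. -/
import Mathlib


/-- A row `a : Fin n → R` is unimodular if its entries generate the unit ideal. -/
def IsUnimodularRow {R : Type*} [CommRing R] {n : ℕ} (a : Fin n → R) : Prop :=
  Ideal.span (Set.range a) = ⊤

/-- The Bass stable range of `R` is at most `n`: every unimodular row of length `n + 1`
can be shortened to a unimodular row of length `n` by elementary modifications. -/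
def BassStableRangeLE (R : Type*) [CommRing R] (n : ℕ) : Prop :=
  ∀ a : Fin (n + 1) → R, IsUnimodularRow a →
    ∃ b : Fin n → R,
      IsUnimodularRow (fun i : Fin n => a i.castSucc + b i * a (Fin.last n))

/-- If `R` has Bass stable range at most `n` and `I ⊆ R` is an ideal such that `R/I` is a
finitely presented `R`-algebra (i.e. `I` is finitely generated), then every unimodular row
of length `n` over `R/I` lifts to a unimodular row of length `n` over `R`. -/
theorem stmt_8 (R : Type*) [CommRing R] (n : ℕ)
    (hsr : BassStableRangeLE R n) (I : Ideal R) (hI : I.FG)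
    (abar : Fin n → R ⧸ I) (habar : IsUnimodularRow abar) :
    ∃ a : Fin n → R, IsUnimodularRow a ∧ ∀ i, Ideal.Quotient.mk I (a i) = abar i := by
  -- lift the row arbitrarily
  choose a ha using fun i => Ideal.Quotient.mk_surjective (abar i)
  -- span (range a) ⊔ I = ⊤
  have hmap : Ideal.map (Ideal.Quotient.mk I) (Ideal.span (Set.range a)) = ⊤ := by
    rw [Ideal.map_span, ← Set.range_comp]
    have : (Ideal.Quotient.mk I) ∘ a = abar := funext ha
    rw [this, habar]
  have h1 : (1 : R ⧸ I) ∈ Ideal.map (Ideal.Quotient.mk I) (Ideal.span (Set.range a)) := by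
    rw [hmap]; trivial
  obtain ⟨s, hs, hs1⟩ :=
    (Ideal.mem_image_of_mem_map_of_surjective _ Ideal.Quotient.mk_surjective) h1
  have ht : 1 - s ∈ I := by
    rw [← Ideal.Quotient.eq_zero_iff_mem, map_sub, hs1, map_one, sub_self]
  set t := 1 - s with htdef
  have hst : s + t = 1 := by ring
  -- extended row
  set a' : Fin (n + 1) → R := Fin.snoc a t with ha'
  have ha'uni : IsUnimodularRow a' := by
    rw [IsUnimodularRow, Ideal.eq_top_iff_one, ← hst]
    apply Ideal.add_mem
    · refine Ideal.span_mono ?_ hs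
      intro x hx
      obtain ⟨i, rfl⟩ := hx
      exact ⟨i.castSucc, by simp [ha', Fin.snoc_castSucc]⟩
    · exact Ideal.subset_span ⟨Fin.last n, by simp [ha', Fin.snoc_last]⟩
  obtain ⟨b, hb⟩ := hsr a' ha'uni
  refine ⟨fun i => a' i.castSucc + b i * a' (Fin.last n), hb, fun i => ?_⟩
  simp only [ha', Fin.snoc_castSucc, Fin.snoc_last]
  rw [map_add, map_mul, Ideal.Quotient.eq_zero_iff_mem.mpr ht, mul_zero, add_zero]
  exact ha i
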